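/- With the setup of Φ[a,b,c,d], the set of product vectors {x_α ⊗ y_α : α ∈ ℂ} spans all of ℂ² ⊗ ℂ⁴ ≅ ℂ⁸, where x_α = (1, ᾱ)ᵀ. -/

import Mathlib

/-- The product vectors `x_α ⊗ y_α`, `α ∈ ℂ`, span all of `ℂ² ⊗ ℂ⁴ ≅ ℂ⁸`. -/
theorem product_vectors_span_top (a b c d e f g h k : ℝ)
    (ha : 0 < a) (hb : 0 < b) (hc : 0 < c) (hd : 0 < d) (hab : 1 < a * b)
    (hg : g = Real.sqrt (a * c * d))
    (he : e = a * (c + d) * c / (a * b - 1))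
    (hf : f = a * (c + d) * d / (a * b - 1))
    (hh : h = b * e - c ^ 2) (hk : k = b * f - d ^ 2) :
    Submodule.span ℂ
      (Set.range (fun α : ℂ => fun p : Fin 2 × Fin 4 =>
        (![1, starRingEnd ℂ α] : Fin 2 → ℂ) p.1 *
        (![(g : ℂ) * α * (1 - α),
           α * ((h : ℂ) - (c : ℂ) * (d : ℂ) * (α + starRingEnd ℂ α) +
             (k : ℂ) * ((‖α‖ : ℝ) : ℂ) ^ 2),
           -((e : ℂ) + (f : ℂ) * ((‖α‖ : ℝ) : ℂ) ^ 2),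
           -(starRingEnd ℂ α) * ((c : ℂ) + (d : ℂ) * α)] : Fin 4 → ℂ) p.2)) = ⊤ := by
  -- basic positivity facts
  have hab1 : (0:ℝ) < a * b - 1 := by linarith
  have hg0 : (0:ℝ) < g := by
    rw [hg]; exact Real.sqrt_pos.mpr (by positivity)
  have he0 : (0:ℝ) < e := by rw [he]; positivity
  have hf0 : (0:ℝ) < f := by rw [hf]; positivity
  have hk0 : (0:ℝ) < k := by
    have hk' : k = d * (a * b * c + d) / (a * b - 1) := by
      rw [hk, hf, eq_div_iff hab1.ne', sub_mul, mul_assoc, div_mul_cancel₀ _ hab1.ne']; ring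
    rw [hk']; positivity
  have hhc0 : (0:ℝ) < h - c * d := by
    have hh' : h - c * d = c * (c + d) / (a * b - 1) := by
      rw [hh, he, eq_div_iff hab1.ne', sub_mul, sub_mul, mul_assoc, div_mul_cancel₀ _ hab1.ne']; ring
    rw [hh']; positivity
  have hgC : (g:ℂ) ≠ 0 := Complex.ofReal_ne_zero.mpr (ne_of_gt hg0)
  have heC : (e:ℂ) ≠ 0 := Complex.ofReal_ne_zero.mpr (ne_of_gt he0)
  have hfC : (f:ℂ) ≠ 0 := Complex.ofReal_ne_zero.mpr (ne_of_gt hf0)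
  have hkC : (k:ℂ) ≠ 0 := Complex.ofReal_ne_zero.mpr (ne_of_gt hk0)
  have hcC : (c:ℂ) ≠ 0 := Complex.ofReal_ne_zero.mpr (ne_of_gt hc)
  have hhcC : (h:ℂ) - (c:ℂ) * (d:ℂ) ≠ 0 := by
    have : ((h - c * d : ℝ) : ℂ) ≠ 0 := Complex.ofReal_ne_zero.mpr (ne_of_gt hhc0)
    push_cast at this; exact this
  by_contra hne
  obtain ⟨φ, hφ0, hφ⟩ := Submodule.exists_dual_map_eq_bot_of_lt_top
    (lt_top_iff_ne_top.mpr hne) inferInstance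
  have hmem : ∀ α : ℂ, φ (fun p : Fin 2 × Fin 4 =>
        (![1, starRingEnd ℂ α] : Fin 2 → ℂ) p.1 *
        (![(g : ℂ) * α * (1 - α),
           α * ((h : ℂ) - (c : ℂ) * (d : ℂ) * (α + starRingEnd ℂ α) +
             (k : ℂ) * ((‖α‖ : ℝ) : ℂ) ^ 2),
           -((e : ℂ) + (f : ℂ) * ((‖α‖ : ℝ) : ℂ) ^ 2),
           -(starRingEnd ℂ α) * ((c : ℂ) + (d : ℂ) * α)] : Fin 4 → ℂ) p.2) = 0 := by
    intro α
    have h1 : (fun p : Fin 2 × Fin 4 =>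
        (![1, starRingEnd ℂ α] : Fin 2 → ℂ) p.1 *
        (![(g : ℂ) * α * (1 - α),
           α * ((h : ℂ) - (c : ℂ) * (d : ℂ) * (α + starRingEnd ℂ α) +
             (k : ℂ) * ((‖α‖ : ℝ) : ℂ) ^ 2),
           -((e : ℂ) + (f : ℂ) * ((‖α‖ : ℝ) : ℂ) ^ 2),
           -(starRingEnd ℂ α) * ((c : ℂ) + (d : ℂ) * α)] : Fin 4 → ℂ) p.2) ∈
        Submodule.span ℂ (Set.range (fun α : ℂ => fun p : Fin 2 × Fin 4 =>
        (![1, starRingEnd ℂ α] : Fin 2 → ℂ) p.1 *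
        (![(g : ℂ) * α * (1 - α),
           α * ((h : ℂ) - (c : ℂ) * (d : ℂ) * (α + starRingEnd ℂ α) +
             (k : ℂ) * ((‖α‖ : ℝ) : ℂ) ^ 2),
           -((e : ℂ) + (f : ℂ) * ((‖α‖ : ℝ) : ℂ) ^ 2),
           -(starRingEnd ℂ α) * ((c : ℂ) + (d : ℂ) * α)] : Fin 4 → ℂ) p.2)) :=
      Submodule.subset_span ⟨α, rfl⟩
    have h2 := Submodule.mem_map_of_mem (f := φ) h1
    rw [hφ] at h2
    simpa using h2
  -- the basis values of φ
  obtain ⟨P, hP⟩ : ∃ P : Fin 2 × Fin 4 → ℂ,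
      ∀ p : Fin 2 × Fin 4, P p = φ (fun j => if p = j then 1 else 0) := ⟨_, fun _ => rfl⟩
  -- the key identity
  have K : ∀ α : ℂ,
      (g:ℂ)*α*(1-α)*P (0,0)
      + α*((h:ℂ) - (c:ℂ)*(d:ℂ)*(α + starRingEnd ℂ α) + (k:ℂ)*(α * starRingEnd ℂ α))*P (0,1)
      - ((e:ℂ) + (f:ℂ)*(α * starRingEnd ℂ α))*P (0,2)
      - starRingEnd ℂ α*((c:ℂ) + (d:ℂ)*α)*P (0,3)
      + starRingEnd ℂ α*((g:ℂ)*α*(1-α))*P (1,0)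
      + starRingEnd ℂ α*(α*((h:ℂ) - (c:ℂ)*(d:ℂ)*(α + starRingEnd ℂ α)
          + (k:ℂ)*(α * starRingEnd ℂ α)))*P (1,1)
      - starRingEnd ℂ α*((e:ℂ) + (f:ℂ)*(α * starRingEnd ℂ α))*P (1,2)
      - starRingEnd ℂ α*(starRingEnd ℂ α*((c:ℂ) + (d:ℂ)*α))*P (1,3) = 0 := by
    intro α
    have habs : ((‖α‖ : ℝ) : ℂ)^2 = α * starRingEnd ℂ α := by
      rw [← Complex.ofReal_pow, Complex.sq_norm, Complex.mul_conj]
    have hK := hmem α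
    rw [LinearMap.pi_apply_eq_sum_univ] at hK
    simp only [Fintype.sum_prod_type, Fin.sum_univ_two, Fin.sum_univ_four,
      Matrix.cons_val_zero, Matrix.cons_val_one, Matrix.head_cons,
      Matrix.cons_val_two, Matrix.cons_val_three, Matrix.tail_cons, smul_eq_mul,
      habs, ← hP] at hK
    linear_combination hK
  have h0 := K 0
  have h1 := K 1
  have h2 := K (-1)
  have h3 := K 2
  have h4 := K (-2)
  have h5 := K Complex.I
  have h6 := K (-Complex.I)
  have h7 := K (2*Complex.I)
  have h9 := K (1+Complex.I)
  simp only [map_zero, map_one, map_neg, map_add, map_mul, Complex.conj_I,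
    map_ofNat] at h0 h1 h2 h3 h4 h5 h6 h7 h9
  -- successively show all coordinates of φ vanish
  have hp2 : P (0,2) = 0 := by
    have : (e:ℂ) * P (0,2) = 0 := by linear_combination ((-1:ℂ))*h0
    exact (mul_eq_zero.mp this).resolve_left heC
  have hq1 : P (1,1) = 0 := by
    have : (k:ℂ) * P (1,1) = 0 := by
      linear_combination ((1/4:ℂ))*h0 + ((-1/6:ℂ))*h1 + ((-1/6:ℂ))*h2 + ((1/24:ℂ))*h3 + ((1/24:ℂ))*h4
    exact (mul_eq_zero.mp this).resolve_left hkC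
  have hq3 : P (1,3) = 0 := by
    have : (c:ℂ) * P (1,3) = 0 := by
      linear_combination ((-1/8:ℂ)*Complex.I)*h0 + ((-1/8:ℂ)+(5/24:ℂ)*Complex.I)*h1 + ((-1/8:ℂ)+(1/24:ℂ)*Complex.I)*h2 + ((1/48:ℂ)*Complex.I)*h3 + ((-1/48:ℂ)*Complex.I)*h4 + ((1/8:ℂ)+(1/8:ℂ)*Complex.I)*h5 + ((1/8:ℂ)+(-1/24:ℂ)*Complex.I)*h6 + ((1/24:ℂ)*Complex.I)*h7 + ((-1/4:ℂ)*Complex.I)*h9 + ((-1/4:ℂ)*(↑f)*P (0,2) + (1/4:ℂ)*(↑f)*Complex.I*P (1,2) + (1/4:ℂ)*(↑f)*Complex.I*Complex.I*P (1,2) + (1/4:ℂ)*(↑k)*P (1,1) + (-1/4:ℂ)*(↑k)*Complex.I*P (0,1) + (-1/4:ℂ)*(↑k)*Complex.I*Complex.I*P (1,1) + (1/4:ℂ)*(↑k)*Complex.I*Complex.I*P (0,1) + (-1/2:ℂ)*(↑k)*Complex.I*Complex.I*Complex.I*P (1,1) + (-1/4:ℂ)*(↑d)*P (0,3) + (1/4:ℂ)*(↑d)*Complex.I*P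 (1,3) + (1/4:ℂ)*(↑d)*Complex.I*Complex.I*P (1,3) + (3/4:ℂ)*(↑c)*P (1,3) + (-1/2:ℂ)*(↑c)*(↑d)*P (0,1) + (1/2:ℂ)*(↑c)*(↑d)*Complex.I*P (1,1) + (1/4:ℂ)*(↑h)*P (1,1) + (1/4:ℂ)*(↑g)*P (1,0) + (-1/4:ℂ)*(↑g)*P (0,0) + (1/4:ℂ)*(↑g)*Complex.I*P (1,0) + (-1/4:ℂ)*(↑g)*Complex.I*Complex.I*P (1,0))*Complex.I_sq
    exact (mul_eq_zero.mp this).resolve_left hcC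
  have hq2 : P (1,2) = 0 := by
    have : (f:ℂ) * P (1,2) = 0 := by
      linear_combination ((1/12:ℂ)+(-1/6:ℂ)*Complex.I)*h1 + ((-1/12:ℂ)+(-1/6:ℂ)*Complex.I)*h2 + ((-1/24:ℂ)+(1/24:ℂ)*Complex.I)*h3 + ((1/24:ℂ)+(1/24:ℂ)*Complex.I)*h4 + ((1/4:ℂ)*Complex.I)*h5 + ((1/12:ℂ)*Complex.I)*h6 + ((-1/12:ℂ)*Complex.I)*h7 + ((-1:ℂ)*(↑c)*(↑d))*hq1 + ((-1:ℂ)*(↑d))*hq3 + ((1/2:ℂ)*(↑f)*P (1,2) + (-1/2:ℂ)*(↑f)*Complex.I*Complex.I*P (1,2) + (1/2:ℂ)*(↑k)*P (0,1) + (-1:ℂ)*(↑k)*Complex.I*P (1,1) + (-1/2:ℂ)*(↑k)*Complex.I*Complex.I*P (0,1) + (1:ℂ)*(↑k)*Complex.I*Complex.I*Complex.I*P (1,1) + (1/2:ℂ)*(↑d)*P (1,3) + (-1/2:ℂ)*(↑d)*Complex.I*Complex.I*P (1,3) + (-1/2:ℂ)*(↑g)*P (1,0) + (1/2:ℂ)*(↑g)*Complex.I*Complex.I*P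 (1,0))*Complex.I_sq
    exact (mul_eq_zero.mp this).resolve_left hfC
  have hp3 : P (0,3) = 0 := by
    have : (c:ℂ) * P (0,3) = 0 := by
      linear_combination ((-1/3:ℂ)+(1/6:ℂ)*Complex.I)*h1 + ((1/3:ℂ)+(1/6:ℂ)*Complex.I)*h2 + ((1/24:ℂ)+(-1/24:ℂ)*Complex.I)*h3 + ((-1/24:ℂ)+(-1/24:ℂ)*Complex.I)*h4 + ((-1/2:ℂ)*Complex.I)*h5 + ((1/6:ℂ)*Complex.I)*h6 + ((1/12:ℂ)*Complex.I)*h7 + ((-1:ℂ)*(↑e))*hq2 + ((1/2:ℂ)*(↑e)*P (1,2) + (1:ℂ)*(↑k)*Complex.I*P (1,1) + (-1:ℂ)*(↑k)*Complex.I*Complex.I*Complex.I*P (1,1) + (1/2:ℂ)*(↑c)*P (0,3) + (1/2:ℂ)*(↑h)*P (0,1) + (1/2:ℂ)*(↑g)*P (0,0))*Complex.I_sq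
    exact (mul_eq_zero.mp this).resolve_left hcC
  have hp1 : P (0,1) = 0 := by
    have : ((h:ℂ) - (c:ℂ)*(d:ℂ)) * P (0,1) = 0 := by
      linear_combination ((-1/8:ℂ)*Complex.I)*h0 + ((11/24:ℂ)+(3/8:ℂ)*Complex.I)*h1 + ((-5/24:ℂ)+(5/24:ℂ)*Complex.I)*h2 + ((-1/24:ℂ)+(-1/48:ℂ)*Complex.I)*h3 + ((1/24:ℂ)+(-1/16:ℂ)*Complex.I)*h4 + ((-1/8:ℂ)+(-3/8:ℂ)*Complex.I)*h5 + ((-1/8:ℂ)+(1/8:ℂ)*Complex.I)*h6 + ((1/8:ℂ)*Complex.I)*h7 + ((-1/4:ℂ)*Complex.I)*h9 + ((1/4:ℂ)*(↑f)*P (0,2) + (1/4:ℂ)*(↑f)*Complex.I*P (1,2) + (1/4:ℂ)*(↑f)*Complex.I*Complex.I*P (1,2) + (1/2:ℂ)*(↑e)*P (1,2) + (-1/4:ℂ)*(↑k)*P (1,1) + (1:ℂ)*(↑k)*Complex.I*P (1,1) + (-1/4:ℂ)*(↑k)*Complex.I*P (0,1) + (1/4:ℂ)*(↑k)*Complex.I*Complex.I*P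 (1,1) + (1/4:ℂ)*(↑k)*Complex.I*Complex.I*P (0,1) + (-3/2:ℂ)*(↑k)*Complex.I*Complex.I*Complex.I*P (1,1) + (1/4:ℂ)*(↑d)*P (0,3) + (1/4:ℂ)*(↑d)*Complex.I*P (1,3) + (1/4:ℂ)*(↑d)*Complex.I*Complex.I*P (1,3) + (1/4:ℂ)*(↑c)*P (1,3) + (1/2:ℂ)*(↑c)*P (0,3) + (-1/2:ℂ)*(↑c)*(↑d)*P (0,1) + (1/2:ℂ)*(↑c)*(↑d)*Complex.I*P (1,1) + (-1/4:ℂ)*(↑h)*P (1,1) + (1/2:ℂ)*(↑h)*P (0,1) + (-1/4:ℂ)*(↑g)*P (1,0) + (-1/4:ℂ)*(↑g)*P (0,0) + (1/4:ℂ)*(↑g)*Complex.I*P (1,0) + (-1/4:ℂ)*(↑g)*Complex.I*Complex.I*P (1,0))*Complex.I_sq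
    exact (mul_eq_zero.mp this).resolve_left hhcC
  have hp0 : P (0,0) = 0 := by
    have : (g:ℂ) * P (0,0) = 0 := by
      linear_combination ((1/3:ℂ)+(1/6:ℂ)*Complex.I)*h1 + ((-1/3:ℂ)+(1/6:ℂ)*Complex.I)*h2 + ((-1/24:ℂ)+(-1/24:ℂ)*Complex.I)*h3 + ((1/24:ℂ)+(-1/24:ℂ)*Complex.I)*h4 + ((-1/2:ℂ)*Complex.I)*h5 + ((1/6:ℂ)*Complex.I)*h6 + ((1/12:ℂ)*Complex.I)*h7 + ((-1:ℂ)*(↑h))*hp1 + ((1/2:ℂ)*(↑e)*P (1,2) + (1:ℂ)*(↑k)*Complex.I*P (1,1) + (-1:ℂ)*(↑k)*Complex.I*Complex.I*Complex.I*P (1,1) + (1/2:ℂ)*(↑c)*P (0,3) + (1/2:ℂ)*(↑h)*P (0,1) + (1/2:ℂ)*(↑g)*P (0,0))*Complex.I_sq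
    exact (mul_eq_zero.mp this).resolve_left hgC
  have hq0 : P (1,0) = 0 := by
    have : (g:ℂ) * P (1,0) = 0 := by
      linear_combination ((1/12:ℂ)+(1/6:ℂ)*Complex.I)*h1 + ((-1/12:ℂ)+(1/6:ℂ)*Complex.I)*h2 + ((-1/24:ℂ)+(-1/24:ℂ)*Complex.I)*h3 + ((1/24:ℂ)+(-1/24:ℂ)*Complex.I)*h4 + ((-1/4:ℂ)*Complex.I)*h5 + ((-1/12:ℂ)*Complex.I)*h6 + ((1/12:ℂ)*Complex.I)*h7 + ((1:ℂ)*(↑k))*hp1 + ((-1:ℂ)*(↑c)*(↑d))*hq1 + ((-1/2:ℂ)*(↑f)*P (1,2) + (1/2:ℂ)*(↑f)*Complex.I*Complex.I*P (1,2) + (-1/2:ℂ)*(↑k)*P (0,1) + (1:ℂ)*(↑k)*Complex.I*P (1,1) + (1/2:ℂ)*(↑k)*Complex.I*Complex.I*P (0,1) + (-1:ℂ)*(↑k)*Complex.I*Complex.I*Complex.I*P (1,1) + (-1/2:ℂ)*(↑d)*P (1,3) + (1/2:ℂ)*(↑d)*Complex.I*Complex.I*P (1,3) + (1/2:ℂ)*(↑g)*P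 (1,0) + (-1/2:ℂ)*(↑g)*Complex.I*Complex.I*P (1,0))*Complex.I_sq
    exact (mul_eq_zero.mp this).resolve_left hgC
  have hPz : ∀ p : Fin 2 × Fin 4, P p = 0 := by
    intro p
    fin_cases p <;> assumption
  refine hφ0 (LinearMap.ext fun x => ?_)
  rw [LinearMap.pi_apply_eq_sum_univ]
  simp only [← hP]
  simp [hPz]
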